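/- Let N, M, K be positive natural numbers, and let X ∈ ℂ^{N×K}, B ∈ ℂ^{N×M}, W ∈ ℂ^{M×K}. Then X = B·W if and only if there exist matrices U ∈ ℂ^{N×N} and V ∈ ℂ^{K×K} such that the (N+K+M)×(N+K+M) block matrix [[U, X, B], [Xᴴ, V, Wᴴ], [Bᴴ, W, I_M]] is positive semidefinite and Re(Tr(U − B·Bᴴ)) ≤ 0. -/

import Mathlib

open Matrix
open scoped ComplexOrder

/-- If the real part of `trace (Qᴴ * Q)` is nonpositive, then `Q = 0`. -/
lemma aux_eq_zero_of_trace_re_nonpos {m n : Type*} [Fintype m] [Fintype n]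
    (Q : Matrix m n ℂ) (h : (Matrix.trace (Qᴴ * Q)).re ≤ 0) : Q = 0 := by
  have hre : (Matrix.trace (Qᴴ * Q)).re = ∑ j, ∑ k, Complex.normSq (Q k j) := by
    simp only [Matrix.trace, Matrix.diag, Matrix.mul_apply, Matrix.conjTranspose_apply,
      Complex.re_sum, Complex.normSq_apply, Complex.mul_re, Complex.star_def,
      Complex.conj_re, Complex.conj_im]
    ring_nf
  rw [hre] at h
  have hz : ∑ j, ∑ k, Complex.normSq (Q k j) = 0 :=
    le_antisymm h (Finset.sum_nonneg fun _ _ => Finset.sum_nonneg fun _ _ => Complex.normSq_nonneg _)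
  ext k j
  have h1 := (Finset.sum_eq_zero_iff_of_nonneg
    (fun _ _ => Finset.sum_nonneg fun _ _ => Complex.normSq_nonneg _)).mp hz j (Finset.mem_univ _)
  have h2 := (Finset.sum_eq_zero_iff_of_nonneg
    (fun _ _ => Complex.normSq_nonneg _)).mp h1 k (Finset.mem_univ _)
  simpa using Complex.normSq_eq_zero.mp h2

/-- Lemma 1 (factorization LMI equivalence, before using binarity of B):
`X = B * W` iff there exist `U`, `V` such that the block matrix
`[[U, X, B], [Xᴴ, V, Wᴴ], [Bᴴ, W, I_M]]` is positive semidefinite and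
`Re (Tr (U - B * Bᴴ)) ≤ 0`. -/
theorem stmt_0 (N M K : ℕ) (hN : 0 < N) (hM : 0 < M) (hK : 0 < K)
    (X : Matrix (Fin N) (Fin K) ℂ) (B : Matrix (Fin N) (Fin M) ℂ)
    (W : Matrix (Fin M) (Fin K) ℂ) :
    X = B * W ↔
      ∃ (U : Matrix (Fin N) (Fin N) ℂ) (V : Matrix (Fin K) (Fin K) ℂ),
        (Matrix.fromBlocks
            (Matrix.fromBlocks U X Xᴴ V)
            (Matrix.fromRows B Wᴴ)
            (Matrix.fromCols Bᴴ W)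
            (1 : Matrix (Fin M) (Fin M) ℂ)).PosSemidef ∧
        (Matrix.trace (U - B * Bᴴ)).re ≤ 0 := by
  constructor
  · rintro rfl
    refine ⟨B * Bᴴ, Wᴴ * W, ?_, by simp⟩
    have hD : (Matrix.fromBlocks
          (Matrix.fromBlocks (B * Bᴴ) (B * W) (B * W)ᴴ (Wᴴ * W))
          (Matrix.fromRows B Wᴴ) (Matrix.fromCols Bᴴ W)
          (1 : Matrix (Fin M) (Fin M) ℂ))
        = (Matrix.fromCols (Matrix.fromCols Bᴴ W)
            (1 : Matrix (Fin M) (Fin M) ℂ))ᴴ *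
          (Matrix.fromCols (Matrix.fromCols Bᴴ W)
            (1 : Matrix (Fin M) (Fin M) ℂ)) := by
      rw [Matrix.conjTranspose_fromCols_eq_fromRows_conjTranspose,
        Matrix.fromRows_mul_fromCols,
        Matrix.conjTranspose_fromCols_eq_fromRows_conjTranspose,
        Matrix.fromRows_mul_fromCols]
      simp [Matrix.conjTranspose_mul]
    rw [hD]
    exact Matrix.posSemidef_conjTranspose_mul_self _
  · rintro ⟨U, V, hP, htr⟩
    obtain ⟨C, hC⟩ := by
      open scoped MatrixOrder in
      exact CStarAlgebra.nonneg_iff_eq_star_mul_self.mp hP.nonneg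
    rw [Matrix.star_eq_conjTranspose] at hC
    set C1 : Matrix ((Fin N ⊕ Fin K) ⊕ Fin M) (Fin N) ℂ :=
      C.submatrix id (Sum.inl ∘ Sum.inl) with hC1
    set C2 : Matrix ((Fin N ⊕ Fin K) ⊕ Fin M) (Fin K) ℂ :=
      C.submatrix id (Sum.inl ∘ Sum.inr) with hC2
    set C3 : Matrix ((Fin N ⊕ Fin K) ⊕ Fin M) (Fin M) ℂ :=
      C.submatrix id Sum.inr with hC3
    have entry := fun a b => congrFun (congrFun hC a) b
    have hU : U = C1ᴴ * C1 := by
      ext i j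
      simpa [Matrix.mul_apply, hC1, Matrix.conjTranspose_apply] using
        entry (Sum.inl (Sum.inl i)) (Sum.inl (Sum.inl j))
    have hX : X = C1ᴴ * C2 := by
      ext i j
      simpa [Matrix.mul_apply, hC1, hC2, Matrix.conjTranspose_apply] using
        entry (Sum.inl (Sum.inl i)) (Sum.inl (Sum.inr j))
    have hB : B = C1ᴴ * C3 := by
      ext i j
      simpa [Matrix.mul_apply, hC1, hC3, Matrix.conjTranspose_apply] using
        entry (Sum.inl (Sum.inl i)) (Sum.inr j)
    have hWH : Wᴴ = C2ᴴ * C3 := by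
      ext i j
      simpa [Matrix.mul_apply, hC2, hC3, Matrix.conjTranspose_apply] using
        entry (Sum.inl (Sum.inr i)) (Sum.inr j)
    have hI : (1 : Matrix (Fin M) (Fin M) ℂ) = C3ᴴ * C3 := by
      ext i j
      simpa [Matrix.mul_apply, hC3, Matrix.conjTranspose_apply, Matrix.one_apply] using
        entry (Sum.inr i) (Sum.inr j)
    set A : Matrix (Fin M) (Fin N) ℂ := C3ᴴ * C1 with hA
    have hBA : B = Aᴴ := by
      rw [hB, hA, Matrix.conjTranspose_mul, Matrix.conjTranspose_conjTranspose]
    set Q : Matrix ((Fin N ⊕ Fin K) ⊕ Fin M) (Fin N) ℂ := C1 - C3 * A with hQdef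
    have hQ : Qᴴ * Q = U - B * Bᴴ := by
      have hQH : Qᴴ = C1ᴴ - Aᴴ * C3ᴴ := by
        rw [hQdef, Matrix.conjTranspose_sub, Matrix.conjTranspose_mul]
      rw [hQdef, hQH, Matrix.sub_mul, Matrix.mul_sub, Matrix.mul_sub]
      have e1 : C1ᴴ * (C3 * A) = Aᴴ * A := by
        rw [← Matrix.mul_assoc]
        congr 1
        rw [hA, Matrix.conjTranspose_mul, Matrix.conjTranspose_conjTranspose]
      have e2 : Aᴴ * C3ᴴ * C1 = Aᴴ * A := by
        rw [Matrix.mul_assoc, ← hA]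
      have e3 : Aᴴ * C3ᴴ * (C3 * A) = Aᴴ * A := by
        rw [Matrix.mul_assoc, ← Matrix.mul_assoc C3ᴴ, ← hI, Matrix.one_mul]
      rw [e1, e2, e3, hU, hBA, Matrix.conjTranspose_conjTranspose]
      abel
    have hQ0 : Q = 0 := by
      apply aux_eq_zero_of_trace_re_nonpos
      rw [hQ]; exact htr
    have hC1eq : C1 = C3 * A := by
      have := sub_eq_zero.mp hQ0
      exact this
    have hW : W = C3ᴴ * C2 := by
      have := congrArg Matrix.conjTranspose hWH
      simpa [Matrix.conjTranspose_mul] using this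
    rw [hX, hC1eq, hBA, hW, Matrix.conjTranspose_mul, Matrix.mul_assoc]
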